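/- Let q > 1 and let F : ℝ → ℝ be differentiable with F(0) = 0 and F' = f satisfying: f(t)/t^{q-1} is increasing on (0,∞). Then for every t > 0, the quantity (1/q) f(t) t - F(t) ≥ 0, and moreover t ↦ (1/q) f(t) t - F(t) is nondecreasing on (0, ∞). -/

import Mathlib

open Real MeasureTheory Set intervalIntegral

lemma key16 (q : ℝ) (hq : 1 < q) (F f : ℝ → ℝ)
    (hF : ∀ t : ℝ, HasDerivAt F (f t) t)
    (hmono : MonotoneOn (fun t => f t / t ^ (q - 1)) (Set.Ioi 0))
    {a b : ℝ} (ha : 0 < a) (hab : a ≤ b) :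
    F b - F a ≤ f b / b ^ (q - 1) * ((b ^ q - a ^ q) / q) := by
  have hb : 0 < b := lt_of_lt_of_le ha hab
  set c := f b / b ^ (q - 1) with hc
  have hsub : uIcc a b ⊆ Set.Ioi (0:ℝ) := by
    rw [uIcc_of_le hab]
    exact fun x hx => lt_of_lt_of_le ha hx.1
  have hcont : Continuous fun τ : ℝ => τ ^ (q - 1) :=
    continuous_id.rpow_const (fun x => Or.inr (by linarith))
  -- integrability of f on [a,b]
  have hint : IntervalIntegrable f volume a b := by
    have h1 : IntervalIntegrable (fun τ => f τ / τ ^ (q - 1) * τ ^ (q - 1)) volume a b :=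
      ((hmono.mono hsub).intervalIntegrable).mul_continuousOn hcont.continuousOn
    rw [intervalIntegrable_iff] at h1 ⊢
    refine h1.congr_fun (fun x hx => ?_) measurableSet_uIoc
    have hx0 : 0 < x := hsub (uIoc_subset_uIcc hx)
    field_simp [(Real.rpow_pos_of_pos hx0 (q-1)).ne']
  have hle : ∀ x ∈ Icc a b, f x ≤ c * x ^ (q - 1) := by
    intro x hx
    have hx0 : 0 < x := lt_of_lt_of_le ha hx.1
    have := hmono (Set.mem_Ioi.2 hx0) (Set.mem_Ioi.2 hb) hx.2
    calc f x = f x / x ^ (q-1) * x ^ (q-1) := by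
              field_simp [(Real.rpow_pos_of_pos hx0 (q-1)).ne']
      _ ≤ c * x ^ (q-1) :=
          mul_le_mul_of_nonneg_right this (Real.rpow_pos_of_pos hx0 (q-1)).le
  have hint2 : IntervalIntegrable (fun τ : ℝ => c * τ ^ (q - 1)) volume a b :=
    (continuous_const.mul hcont).intervalIntegrable a b
  have heq : F b - F a = ∫ τ in a..b, f τ :=
    (integral_eq_sub_of_hasDerivAt (fun x _ => hF x) hint).symm
  have hqm1 : (-1:ℝ) < q - 1 := by linarith
  have hval : (∫ τ in a..b, c * τ ^ (q - 1)) = c * ((b ^ q - a ^ q) / q) := by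
    rw [intervalIntegral.integral_const_mul, integral_rpow (Or.inl hqm1)]
    ring_nf
  calc F b - F a = ∫ τ in a..b, f τ := heq
    _ ≤ ∫ τ in a..b, c * τ ^ (q - 1) :=
        intervalIntegral.integral_mono_on hab hint hint2 hle
    _ = c * ((b ^ q - a ^ q) / q) := hval

lemma ft16 {q : ℝ} (hq : 1 < q) {t : ℝ} (ht : 0 < t) (f : ℝ → ℝ) :
    f t / t ^ (q - 1) * t ^ q = f t * t := by
  have h1 : t ^ q = t ^ (q - 1) * t := by
    rw [← Real.rpow_add_one ht.ne' (q-1)]; ring_nf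
  rw [h1]
  field_simp [(Real.rpow_pos_of_pos ht (q-1)).ne']

theorem stmt16 (q : ℝ) (hq : 1 < q) (F f : ℝ → ℝ)
    (hF : ∀ t : ℝ, HasDerivAt F (f t) t) (hF0 : F 0 = 0)
    (hmono : MonotoneOn (fun t => f t / t ^ (q - 1)) (Set.Ioi 0)) :
    (∀ t > (0 : ℝ), 0 ≤ (1 / q) * f t * t - F t) ∧
      MonotoneOn (fun t => (1 / q) * f t * t - F t) (Set.Ioi 0) := by
  have hq0 : (0:ℝ) < q := by linarith
  constructor
  · intro t ht
    set c := f t / t ^ (q - 1) with hc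
    -- F t ≤ c * t^q / q by taking s → 0+
    have hlim : Filter.Tendsto (fun s => F s + c * ((t ^ q - s ^ q) / q))
        (nhdsWithin 0 (Set.Ioi 0)) (nhds (0 + c * ((t ^ q - 0) / q))) := by
      have hFc : Filter.Tendsto F (nhdsWithin 0 (Set.Ioi 0)) (nhds 0) := by
        have := (hF 0).continuousAt.continuousWithinAt (s := Set.Ioi 0)
        rwa [ContinuousWithinAt, hF0] at this
      have hsq : Filter.Tendsto (fun s : ℝ => s ^ q) (nhdsWithin 0 (Set.Ioi 0)) (nhds 0) := by
        have hct : ContinuousAt (fun s : ℝ => s ^ q) 0 :=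
          Real.continuousAt_rpow_const 0 q (Or.inr hq0.le)
        have := hct.continuousWithinAt (s := Set.Ioi 0)
        rwa [ContinuousWithinAt, Real.zero_rpow hq0.ne'] at this
      exact hFc.add ((((tendsto_const_nhds.sub hsq)).div_const q).const_mul c)
    have hev : ∀ᶠ s in nhdsWithin 0 (Set.Ioi 0),
        F t ≤ F s + c * ((t ^ q - s ^ q) / q) := by
      filter_upwards [Ioc_mem_nhdsGT ht] with s hs
      have := key16 q hq F f hF hmono hs.1 hs.2
      linarith
    have hFt : F t ≤ 0 + c * ((t ^ q - 0) / q) := ge_of_tendsto hlim hev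
    have hct : c * t ^ q = f t * t := ft16 hq ht f
    rw [zero_add, sub_zero] at hFt
    rw [show c * (t ^ q / q) = c * t ^ q * (1/q) by ring, hct] at hFt
    have : f t * t * (1/q) = (1/q) * f t * t := by ring
    linarith
  · intro t1 ht1 t2 ht2 h12
    simp only [Set.mem_Ioi] at ht1 ht2
    have hkey := key16 q hq F f hF hmono ht1 h12
    have hm := hmono (Set.mem_Ioi.2 ht1) (Set.mem_Ioi.2 ht2) h12
    simp only at hm ⊢
    have h1 : f t2 / t2 ^ (q - 1) * t2 ^ q = f t2 * t2 := ft16 hq ht2 f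
    have h2 : f t1 / t1 ^ (q - 1) * t1 ^ q = f t1 * t1 := ft16 hq ht1 f
    have ht1q : (0:ℝ) ≤ t1 ^ q := (Real.rpow_pos_of_pos ht1 q).le
    have hmul : f t1 / t1 ^ (q-1) * t1 ^ q ≤ f t2 / t2 ^ (q-1) * t1 ^ q :=
      mul_le_mul_of_nonneg_right hm ht1q
    rw [h2] at hmul
    -- hkey : F t2 - F t1 ≤ (f t2 / t2^(q-1)) * ((t2^q - t1^q)/q)
    have hexp : f t2 / t2 ^ (q-1) * ((t2 ^ q - t1 ^ q) / q)
        = f t2 * t2 / q - f t2 / t2 ^ (q-1) * t1 ^ q / q := by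
      rw [← h1]; ring
    rw [hexp] at hkey
    have hmulq : f t1 * t1 / q ≤ f t2 / t2 ^ (q-1) * t1 ^ q / q := by gcongr
    have e1 : (1/q) * f t1 * t1 = f t1 * t1 / q := by ring
    have e2 : (1/q) * f t2 * t2 = f t2 * t2 / q := by ring
    linarith
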